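/- There exists a stochastic multiplayer non-zero-sum game G with three players 0, 1, 2, all with terminal reachability objectives, and threshold μ = 1, such that the answer to Stationary-Positional-NCRSP for (G, μ) is yes while the answer to Pure-NCRSP for (G, μ) is no. Concretely, in the game of Example 1, the system's stationary strategy σ₀ that moves from v_a to the terminal with payoff (1,1,0) with probability 1/2 and to the terminal with payoff (1,0,1) with probability 1/2 admits exactly one 0-fixed Nash equilibrium among positional environment profiles, whose payoff profile is (1, 1/2, 1/2); whereas for either pure choice of the system at v_a, some 0-fixed Nash equilibrium gives the system payoff 0. -/

import Mathlib

/- Common infrastructure for formalizing statements about stochastic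
   multiplayer non-zero-sum games (SMGs) and the non-cooperative rational
   synthesis problem (NCRSP), following the paper's definitions. -/

open scoped ENNReal

namespace NCRSPPaper

/-! ### Game arenas -/

/-- A stochastic multiplayer game arena with players `Fin (k+1)` (player `0`
is the system) over vertex type `V`.  A vertex with `owner v = none` is a
nature vertex; its outgoing transition probabilities are given by `prob`.
Player-controlled vertices have their possible moves given by `edge`. -/
structure Arena (k : ℕ) (V : Type) where
  owner : V → Option (Fin (k + 1))
  edge : V → V → Bool
  prob : V → V → ℚ
  init : V

variable {k : ℕ} {V : Type}

/-- The set of successors of a vertex. -/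
def Arena.next (A : Arena k V) (u : V) : Set V :=
  {v | (A.owner u = none ∧ 0 < A.prob u v) ∨ (A.owner u ≠ none ∧ A.edge u v = true)}

/-- A terminal vertex: its only outgoing edge is the self loop. -/
def Arena.terminal (A : Arena k V) (v : V) : Prop := A.next v = {v}

/-- Well-formedness of an arena: every vertex has a successor and the
nature rows are probability distributions. -/
def Arena.WF [Fintype V] (A : Arena k V) : Prop :=
  (∀ u, (A.next u).Nonempty) ∧
  ∀ u, A.owner u = none → (∀ v, 0 ≤ A.prob u v) ∧ (∑ v, A.prob u v) = 1

/-! ### Plays -/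

/-- A play is an infinite sequence of vertices. -/
abbrev Play (V : Type) := ℕ → V

/-- `infSet π` is the set of vertices occurring infinitely often in `π`. -/
def infSet (π : Play V) : Set V := {v | ∀ m, ∃ l, m ≤ l ∧ π l = v}

/-! ### Strategies -/

/-- A (behavioral, possibly history-dependent, probabilistic) strategy:
given the history of vertices strictly preceding the current one and the
current vertex, it yields a probability distribution over vertices. -/
abbrev Strategy (V : Type) := List V → V → PMF V

/-- A strategy is valid for an arena if it only assigns positive
probability to successors of the current vertex. -/
def Strategy.Valid (A : Arena k V) (σ : Strategy V) : Prop :=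
  ∀ hist u v, σ hist u v ≠ 0 → v ∈ A.next u

/-- A stationary (memoryless) strategy depends only on the current vertex. -/
def Strategy.Stationary (σ : Strategy V) : Prop :=
  ∀ h h' u, σ h u = σ h' u

/-- A pure (deterministic) strategy assigns probability 1 to a single move. -/
def Strategy.Pure (σ : Strategy V) : Prop :=
  ∀ h u, ∃ v, σ h u v = 1

/-- A positional strategy is pure and stationary. -/
def Strategy.Positional (σ : Strategy V) : Prop :=
  Strategy.Stationary σ ∧ Strategy.Pure σ

/-- A finite-state strategy is realized by a Mealy machine with finitely
many memory states. -/
def Strategy.FiniteState (σ : Strategy V) : Prop :=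
  ∃ (M : Type) (_ : Finite M) (m0 : M) (upd : M → V → M) (out : M → V → PMF V),
    ∀ h u, σ h u = out (h.foldl upd m0) u

/-- A `t`-memory strategy only depends on the most recent `t` vertices of
the history (plus the current vertex). -/
def Strategy.TMemory (t : ℕ) (σ : Strategy V) : Prop :=
  ∀ h u, σ h u = σ (h.drop (h.length - t)) u

/-- A strategy profile assigns a strategy to every player. -/
abbrev Profile (k : ℕ) (V : Type) := Fin (k + 1) → Strategy V

def Profile.Valid (A : Arena k V) (σ : Profile k V) : Prop :=
  ∀ i, Strategy.Valid A (σ i)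

/-! ### The induced probability of a set of plays -/

/-- One-step transition probability at vertex `u` with preceding history
`hist`, under strategy profile `σ`. -/
noncomputable def Arena.stepProb (A : Arena k V) (σ : Profile k V)
    (hist : List V) (u v : V) : ℝ≥0∞ :=
  match A.owner u with
  | none => ENNReal.ofReal ((A.prob u v : ℚ) : ℝ)
  | some i => σ i hist u v

/-- Probability that, starting from current vertex `u` with preceding
history `hist`, the play continues with the given finite word. -/
noncomputable def extProb (A : Arena k V) (σ : Profile k V) :
    List V → V → List V → ℝ≥0∞
  | _, _, [] => 1
  | hist, u, v :: rest => A.stepProb σ hist u v * extProb A σ (hist ++ [u]) v rest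

/-- Probability that a play starting at `s` begins with the finite word `w`. -/
noncomputable def wordProbFrom [DecidableEq V] (A : Arena k V) (σ : Profile k V)
    (s : V) : List V → ℝ≥0∞
  | [] => 1
  | v :: rest => (if v = s then 1 else 0) * extProb A σ [] v rest

/-- The cylinder of plays extending a finite word. -/
def cyl (w : List V) : Set (Play V) :=
  {π | ∀ i (h : i < w.length), π i = w.get ⟨i, h⟩}

open scoped Classical in
/-- `PrFrom A σ s O` is the probability, under the strategy profile `σ`
(and nature's probabilities), that a play starting at `s` belongs to `O`.
It is defined as the Carathéodory outer measure generated by the natural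
premeasure on cylinder sets. -/
noncomputable def PrFrom [DecidableEq V] (A : Arena k V) (σ : Profile k V)
    (s : V) : Set (Play V) → ℝ≥0∞ :=
  fun O =>
    MeasureTheory.OuterMeasure.ofFunction
      (fun S => if S = ∅ then 0
                else ⨅ (w : List V) (_ : S ⊆ cyl w), wordProbFrom A σ s w)
      (by simp) O

/-- The payoff of player `i`: probability that the objective `O i` is met,
for the play started at the initial vertex. -/
noncomputable def Pay [DecidableEq V] (A : Arena k V)
    (O : Fin (k + 1) → Set (Play V)) (σ : Profile k V) (i : Fin (k + 1)) : ℝ≥0∞ :=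
  PrFrom A σ A.init (O i)

/-! ### Equilibria and synthesis problems -/

/-- Nash equilibrium: no player has a profitable unilateral deviation. -/
def NE [DecidableEq V] (A : Arena k V) (O : Fin (k + 1) → Set (Play V))
    (σ : Profile k V) : Prop :=
  ∀ i, ∀ τ : Strategy V, Strategy.Valid A τ →
    Pay A O (Function.update σ i τ) i ≤ Pay A O σ i

/-- 0-fixed Nash equilibrium: no environment player (`i ≠ 0`) has a
profitable unilateral deviation. -/
def ZeroNE [DecidableEq V] (A : Arena k V) (O : Fin (k + 1) → Set (Play V))
    (σ : Profile k V) : Prop :=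
  ∀ i, i ≠ 0 → ∀ τ : Strategy V, Strategy.Valid A τ →
    Pay A O (Function.update σ i τ) i ≤ Pay A O σ i

/-- The (yes-instances of the) cooperative rational synthesis problem, with
all strategies restricted to class `C`:
`∃ σ̄. NE(σ̄) ∧ Pay₀(σ̄) ≥ μ`. -/
def CRSPAnswer [DecidableEq V] (A : Arena k V) (O : Fin (k + 1) → Set (Play V))
    (C : Strategy V → Prop) (μ : ℚ) : Prop :=
  ∃ σ : Profile k V, Profile.Valid A σ ∧ (∀ i, C (σ i)) ∧ NE A O σ ∧
    ENNReal.ofReal (μ : ℝ) ≤ Pay A O σ 0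

/-- The (yes-instances of the) non-cooperative rational synthesis problem,
with the system's strategy restricted to class `C0` and the environment
players' strategies restricted to class `Cenv`:
`∃ σ₀. ∀ σ̄₋₀. (0NE(σ̄) ⇒ Pay₀(σ̄) ≥ μ)`. -/
def NCRSPAnswer [DecidableEq V] (A : Arena k V) (O : Fin (k + 1) → Set (Play V))
    (C0 Cenv : Strategy V → Prop) (μ : ℚ) : Prop :=
  ∃ σ0 : Strategy V, Strategy.Valid A σ0 ∧ C0 σ0 ∧
    ∀ σ : Profile k V, σ 0 = σ0 → Profile.Valid A σ →
      (∀ i, i ≠ 0 → Cenv (σ i)) →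
      ZeroNE A O σ → ENNReal.ofReal (μ : ℝ) ≤ Pay A O σ 0

/-- The variant `NCRSP>` with strict payoff threshold. -/
def NCRSPgtAnswer [DecidableEq V] (A : Arena k V) (O : Fin (k + 1) → Set (Play V))
    (C0 Cenv : Strategy V → Prop) (μ : ℚ) : Prop :=
  ∃ σ0 : Strategy V, Strategy.Valid A σ0 ∧ C0 σ0 ∧
    ∀ σ : Profile k V, σ 0 = σ0 → Profile.Valid A σ →
      (∀ i, i ≠ 0 → Cenv (σ i)) →
      ZeroNE A O σ → ENNReal.ofReal (μ : ℝ) < Pay A O σ 0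

/-- The complement problem of `NCRSP>`:
`∀ σ₀. ∃ σ̄₋₀. (0NE(σ̄) ∧ Pay₀(σ̄) ≤ μ)`. -/
def CoNCRSPgtAnswer [DecidableEq V] (A : Arena k V) (O : Fin (k + 1) → Set (Play V))
    (C0 Cenv : Strategy V → Prop) (μ : ℚ) : Prop :=
  ∀ σ0 : Strategy V, Strategy.Valid A σ0 → C0 σ0 →
    ∃ σ : Profile k V, σ 0 = σ0 ∧ Profile.Valid A σ ∧
      (∀ i, i ≠ 0 → Cenv (σ i)) ∧
      ZeroNE A O σ ∧ Pay A O σ 0 ≤ ENNReal.ofReal (μ : ℝ)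

/-! ### Objectives -/

/-- Boolean formulas with variables drawn from `α`. -/
inductive BForm (α : Type) : Type
  | tru : BForm α
  | fls : BForm α
  | var : α → BForm α
  | not : BForm α → BForm α
  | and : BForm α → BForm α → BForm α
  | or : BForm α → BForm α → BForm α

namespace BForm

def holds {α : Type} (θ : α → Prop) : BForm α → Prop
  | tru => True
  | fls => False
  | var a => θ a
  | not f => ¬ holds θ f
  | and f g => holds θ f ∧ holds θ g
  | or f g => holds θ f ∨ holds θ g

def map {α β : Type} (f : α → β) : BForm α → BForm β
  | tru => tru
  | fls => fls
  | var a => var (f a)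
  | not g => not (map f g)
  | and g h => and (map f g) (map f h)
  | or g h => or (map f g) (map f h)

def subst {α β : Type} (f : α → BForm β) : BForm α → BForm β
  | tru => tru
  | fls => fls
  | var a => f a
  | not g => not (subst f g)
  | and g h => and (subst f g) (subst f h)
  | or g h => or (subst f g) (subst f h)

def bigOr {α : Type} : List (BForm α) → BForm α
  | [] => fls
  | f :: fs => or f (bigOr fs)

/-- An (arbitrary but fixed) encoding of Boolean formulas over `ℕ` into `ℕ`. -/
def toNat : BForm ℕ → ℕ
  | tru => Nat.pair 0 0
  | fls => Nat.pair 1 0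
  | var i => Nat.pair 2 i
  | not f => Nat.pair 3 (toNat f)
  | and f g => Nat.pair 4 (Nat.pair (toNat f) (toNat g))
  | or f g => Nat.pair 5 (Nat.pair (toNat f) (toNat g))

end BForm

/-- The Muller objective given by a Boolean formula over the vertices:
the set of plays `π` such that `inf(π) ⊨ φ`. -/
def mullerObj (φ : BForm V) : Set (Play V) :=
  {π | BForm.holds (· ∈ infSet π) φ}

/-- Terminal-reachability objective for a set `F` of (terminal) vertices. -/
def trObjS (F : Set V) : Set (Play V) := {π | ∃ m, π m ∈ F}

/-- Terminal-reachability objective, Boolean-valued version. -/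
def trObj (F : V → Bool) : Set (Play V) := trObjS {v | F v = true}

/-! ### End components -/

/-- `E` is an end component of the arena `A` regarded as an MDP of
player `i`: it is nonempty, strongly connected, every vertex of `E`
has a successor in `E`, and vertices not controlled by `i` have all
their successors in `E`. -/
def IsEndComponent (A : Arena k V) (i : Fin (k + 1)) (E : Set V) : Prop :=
  E.Nonempty ∧
  (∀ u ∈ E, ∀ v ∈ E,
    Relation.ReflTransGen (fun a b => a ∈ E ∧ b ∈ E ∧ b ∈ A.next a) u v) ∧
  (∀ v ∈ E, (A.next v ∩ E).Nonempty) ∧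
  (∀ v ∈ E, A.owner v ≠ some i → A.next v ⊆ E)

end NCRSPPaper

namespace NCRSPPaper

/-! ### A concrete machine model, resource-bounded classes, encodings -/

/-- A configuration of a machine with `s+1` states and tape alphabet
`Fin (a+3)` (symbol `0` is the blank, symbols `1`/`2` encode the input
bits `false`/`true`), on a one-way infinite tape. -/
structure Cfg (s a : ℕ) where
  q : Fin (s + 1)
  tape : ℕ → Fin (a + 3)
  pos : ℕ

def blankSym (a : ℕ) : Fin (a + 3) := ⟨0, by omega⟩

def bitSym (a : ℕ) (b : Bool) : Fin (a + 3) :=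
  if b then ⟨2, by omega⟩ else ⟨1, by omega⟩

def initCfg (s a : ℕ) (q0 : Fin (s + 1)) (x : List Bool) : Cfg s a :=
  ⟨q0, fun i => if h : i < x.length then bitSym a (x.get ⟨i, h⟩) else blankSym a, 0⟩

/-- The tape holds the output `y` (as bits, followed by a blank). -/
def readsOff {a : ℕ} (tape : ℕ → Fin (a + 3)) (y : List Bool) : Prop :=
  (∀ i : Fin y.length, tape (i : ℕ) = bitSym a (y.get i)) ∧
  tape y.length = blankSym a

/-- A deterministic Turing machine (one-way infinite single tape). -/
structure TM where
  states : ℕ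
  symbols : ℕ
  start : Fin (states + 1)
  accept : Fin (states + 1)
  step : Fin (states + 1) → Fin (symbols + 3) →
    Option (Fin (states + 1) × Fin (symbols + 3) × Bool)

namespace TM

def stepCfg (M : TM) (c : Cfg M.states M.symbols) : Option (Cfg M.states M.symbols) :=
  match M.step c.q (c.tape c.pos) with
  | none => none
  | some (q', a, mv) =>
      some ⟨q', Function.update c.tape c.pos a, if mv then c.pos + 1 else c.pos - 1⟩

def run (M : TM) (x : List Bool) : ℕ → Option (Cfg M.states M.symbols)
  | 0 => some (initCfg M.states M.symbols M.start x)
  | t + 1 => (M.run x t).bind M.stepCfg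

def Halted (M : TM) (c : Cfg M.states M.symbols) : Prop := M.stepCfg c = none

/-- `M` decides the language `L` (with no resource bound): on every input it
halts, and it halts in the accepting state iff the input is in `L`. -/
def Decides (M : TM) (L : Set (List Bool)) : Prop :=
  ∀ x, ∃ t c, M.run x t = some c ∧ M.Halted c ∧ (x ∈ L ↔ c.q = M.accept)

/-- `M` decides `L` within time `T` (as a function of the input length). -/
def DecidesInTime (M : TM) (L : Set (List Bool)) (T : ℕ → ℕ) : Prop :=
  ∀ x, ∃ t ≤ T x.length, ∃ c, M.run x t = some c ∧ M.Halted c ∧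
    (x ∈ L ↔ c.q = M.accept)

/-- `M` decides `L` within space `S`: it halts with the correct verdict and
never moves its head beyond cell `S(|x|)`. -/
def DecidesInSpace (M : TM) (L : Set (List Bool)) (S : ℕ → ℕ) : Prop :=
  ∀ x, (∃ t c, M.run x t = some c ∧ M.Halted c ∧ (x ∈ L ↔ c.q = M.accept)) ∧
    ∀ t c, M.run x t = some c → c.pos < S x.length

/-- `M` computes, on the encoded inputs `g x`, the encoded outputs `h x`,
within time `T`. -/
def ComputesOn {I : Type} (M : TM) (g h : I → List Bool) (T : ℕ → ℕ) : Prop :=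
  ∀ x, ∃ t ≤ T (g x).length, ∃ c, M.run (g x) t = some c ∧ M.Halted c ∧
    readsOff c.tape (h x)

/-- `M` computes the function `f` on all inputs within time `T`. -/
def ComputesInTime (M : TM) (f : List Bool → List Bool) (T : ℕ → ℕ) : Prop :=
  M.ComputesOn id f T

end TM

/-- A nondeterministic Turing machine. -/
structure NTM where
  states : ℕ
  symbols : ℕ
  start : Fin (states + 1)
  accept : Fin (states + 1)
  step : Fin (states + 1) → Fin (symbols + 3) →
    Finset (Fin (states + 1) × Fin (symbols + 3) × Bool)

namespace NTM

def stepRel (M : NTM) (c c' : Cfg M.states M.symbols) : Prop :=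
  ∃ r ∈ M.step c.q (c.tape c.pos),
    c' = ⟨r.1, Function.update c.tape c.pos r.2.1,
          if r.2.2 then c.pos + 1 else c.pos - 1⟩

/-- `M` has an accepting run on `x` staying within space `S`. -/
def AcceptsInSpace (M : NTM) (x : List Bool) (S : ℕ) : Prop :=
  ∃ (t : ℕ) (cs : ℕ → Cfg M.states M.symbols),
    cs 0 = initCfg M.states M.symbols M.start x ∧
    (∀ i < t, M.stepRel (cs i) (cs (i + 1))) ∧
    (cs t).q = M.accept ∧
    ∀ i ≤ t, (cs i).pos < S

/-- The nondeterministic machine `M` decides `L` within space `S`. -/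
def DecidesInSpace (M : NTM) (L : Set (List Bool)) (S : ℕ → ℕ) : Prop :=
  ∀ x, x ∈ L ↔ M.AcceptsInSpace x (S x.length)

end NTM

/-! #### Complexity classes -/

def In2EXPTIME (L : Set (List Bool)) : Prop :=
  ∃ (M : TM) (c : ℕ), M.DecidesInTime L (fun n => 2 ^ 2 ^ (n ^ c + c))

def In3EXPTIME (L : Set (List Bool)) : Prop :=
  ∃ (M : TM) (c : ℕ), M.DecidesInTime L (fun n => 2 ^ 2 ^ 2 ^ (n ^ c + c))

def InPSPACE (L : Set (List Bool)) : Prop :=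
  ∃ (M : TM) (c : ℕ), M.DecidesInSpace L (fun n => n ^ c + c)

def InEXPSPACE (L : Set (List Bool)) : Prop :=
  ∃ (M : TM) (c : ℕ), M.DecidesInSpace L (fun n => 2 ^ (n ^ c + c))

def InNEXPSPACE (L : Set (List Bool)) : Prop :=
  ∃ (M : NTM) (c : ℕ), M.DecidesInSpace L (fun n => 2 ^ (n ^ c + c))

/-- A language is undecidable if no machine decides it. -/
def Undecidable (L : Set (List Bool)) : Prop := ¬ ∃ M : TM, M.Decides L

def PolytimeComputable (f : List Bool → List Bool) : Prop :=
  ∃ (M : TM) (c : ℕ), M.ComputesInTime f (fun n => n ^ c + c)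

def PolytimeReducible (L L' : Set (List Bool)) : Prop :=
  ∃ f, PolytimeComputable f ∧ ∀ x, x ∈ L ↔ f x ∈ L'

def PSPACEHard (L' : Set (List Bool)) : Prop :=
  ∀ L, InPSPACE L → PolytimeReducible L L'

/-- The language of (the encodings of) the yes-instances of a decision
problem `P` on instances of type `I`, for an encoding `enc`. -/
def langOf {I : Type} (enc : I → List Bool) (P : I → Prop) : Set (List Bool) :=
  {w | ∃ x, enc x = w ∧ P x}

/-! #### Encoding of game instances -/

/-- A concrete encoding of an arena over `Fin n` as a natural number. -/
def encodeArena {k n : ℕ} (A : Arena k (Fin n)) : ℕ :=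
  Encodable.encode
    ( k, n,
      List.ofFn (fun v : Fin n => (A.owner v).map Fin.val),
      List.ofFn (fun v : Fin n => List.ofFn (fun w : Fin n => A.edge v w)),
      List.ofFn (fun v : Fin n => List.ofFn (fun w : Fin n => A.prob v w)),
      (A.init : ℕ) )

/-- An instance of NCRSP with Muller objectives: an SMG over vertices
`Fin n` with players `Fin (k+1)`, Muller objectives given by Boolean
formulas, and a threshold `μ ∈ [0,1]`. -/
structure MullerInstance where
  k : ℕ
  n : ℕ
  A : Arena k (Fin n)
  obj : Fin (k + 1) → BForm (Fin n)
  μ : ℚ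
  wf : A.WF
  hμ0 : 0 ≤ μ
  hμ1 : μ ≤ 1

def encodeMullerInstance (I : MullerInstance) : List Bool :=
  Nat.bits (Encodable.encode
    ( encodeArena I.A,
      List.ofFn (fun i => (BForm.map Fin.val (I.obj i)).toNat),
      Encodable.encode I.μ ))

/-- An instance of NCRSP with terminal-reachability objectives. -/
structure TRInstance where
  k : ℕ
  n : ℕ
  A : Arena k (Fin n)
  F : Fin (k + 1) → Fin n → Bool
  μ : ℚ
  wf : A.WF
  hterm : ∀ i v, F i v = true → A.terminal v
  hμ0 : 0 ≤ μ
  hμ1 : μ ≤ 1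

def encodeTRInstance (I : TRInstance) : List Bool :=
  Nat.bits (Encodable.encode
    ( encodeArena I.A,
      List.ofFn (fun i => List.ofFn (fun v => I.F i v)),
      Encodable.encode I.μ ))

/-- An instance of `t`-memory NCRSP with Muller objectives. -/
structure MullerTInstance where
  k : ℕ
  n : ℕ
  A : Arena k (Fin n)
  obj : Fin (k + 1) → BForm (Fin n)
  t : ℕ
  μ : ℚ
  wf : A.WF
  hμ0 : 0 ≤ μ
  hμ1 : μ ≤ 1

def encodeMullerTInstance (I : MullerTInstance) : List Bool :=
  Nat.bits (Encodable.encode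
    ( encodeArena I.A,
      List.ofFn (fun i => (BForm.map Fin.val (I.obj i)).toNat),
      I.t,
      Encodable.encode I.μ ))

/-- An instance of `t`-memory NCRSP on a non-stochastic game (NSMG,
no nature vertices) with terminal-reachability objectives. -/
structure TRTInstance where
  k : ℕ
  n : ℕ
  A : Arena k (Fin n)
  F : Fin (k + 1) → Fin n → Bool
  t : ℕ
  μ : ℚ
  wf : A.WF
  nonature : ∀ v, A.owner v ≠ none
  hterm : ∀ i v, F i v = true → A.terminal v
  hμ0 : 0 ≤ μ
  hμ1 : μ ≤ 1

def encodeTRTInstance (I : TRTInstance) : List Bool :=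
  Nat.bits (Encodable.encode
    ( encodeArena I.A,
      List.ofFn (fun i => List.ofFn (fun v => I.F i v)),
      I.t,
      Encodable.encode I.μ ))

end NCRSPPaper

namespace NCRSPPaper

/-! ### First-order logic over the ordered field of real numbers -/

/-- Terms over the signature `(+, ×, 0, 1)`, with de Bruijn variables. -/
inductive RTerm : Type
  | var : ℕ → RTerm
  | zero : RTerm
  | one : RTerm
  | add : RTerm → RTerm → RTerm
  | mul : RTerm → RTerm → RTerm

namespace RTerm

noncomputable def eval (ρ : ℕ → ℝ) : RTerm → ℝ
  | var i => ρ i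
  | zero => 0
  | one => 1
  | add s t => eval ρ s + eval ρ t
  | mul s t => eval ρ s * eval ρ t

def toNat : RTerm → ℕ
  | var i => Nat.pair 0 i
  | zero => Nat.pair 1 0
  | one => Nat.pair 2 0
  | add s t => Nat.pair 3 (Nat.pair (toNat s) (toNat t))
  | mul s t => Nat.pair 4 (Nat.pair (toNat s) (toNat t))

end RTerm

/-- First-order formulas over the signature `(+, ×, 0, 1, ≤)`, with de
Bruijn variables. -/
inductive RForm : Type
  | le : RTerm → RTerm → RForm
  | not : RForm → RForm
  | and : RForm → RForm → RForm
  | or : RForm → RForm → RForm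
  | ex : RForm → RForm
  | all : RForm → RForm

namespace RForm

/-- Satisfaction in the structure `(ℝ, +, ×, 0, 1, ≤)`. -/
def holds : (ℕ → ℝ) → RForm → Prop
  | ρ, le s t => RTerm.eval ρ s ≤ RTerm.eval ρ t
  | ρ, not f => ¬ holds ρ f
  | ρ, and f g => holds ρ f ∧ holds ρ g
  | ρ, or f g => holds ρ f ∨ holds ρ g
  | ρ, ex f => ∃ x : ℝ, holds (fun i => match i with | 0 => x | j + 1 => ρ j) f
  | ρ, all f => ∀ x : ℝ, holds (fun i => match i with | 0 => x | j + 1 => ρ j) f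

/-- Validity (truth in `(ℝ, +, ×, 0, 1, ≤)` under every assignment;
for sentences this is just truth). -/
def valid (f : RForm) : Prop := ∀ ρ, holds ρ f

/-- Quantifier-free formulas. -/
def QFree : RForm → Prop
  | le _ _ => True
  | not f => QFree f
  | and f g => QFree f ∧ QFree g
  | or f g => QFree f ∧ QFree g
  | ex _ => False
  | all _ => False

/-- Existential formulas: a block of existential quantifiers applied to a
quantifier-free formula (prenex form with only existential quantifiers). -/
inductive IsExistential : RForm → Prop
  | qf {f : RForm} : QFree f → IsExistential f
  | ex {f : RForm} : IsExistential f → IsExistential (RForm.ex f)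

def toNat : RForm → ℕ
  | le s t => Nat.pair 0 (Nat.pair s.toNat t.toNat)
  | not f => Nat.pair 1 (toNat f)
  | and f g => Nat.pair 2 (Nat.pair (toNat f) (toNat g))
  | or f g => Nat.pair 3 (Nat.pair (toNat f) (toNat g))
  | ex f => Nat.pair 4 (toNat f)
  | all f => Nat.pair 5 (toNat f)

end RForm

def encodeRForm (f : RForm) : List Bool := Nat.bits f.toNat

/-! ### Quantified Boolean formulas -/

/-- Truth of a prenex QBF: `qs` is the (outermost-first) list of
quantifiers (`true` = `∀`, `false` = `∃`); the quantifier at the head of a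
suffix of length `j+1` binds variable `j`. -/
def qbfHolds (φ : BForm ℕ) : List Bool → (ℕ → Bool) → Prop
  | [], ρ => BForm.holds (fun i => ρ i = true) φ
  | q :: qs, ρ =>
      if q then ∀ b : Bool, qbfHolds φ qs (Function.update ρ qs.length b)
      else ∃ b : Bool, qbfHolds φ qs (Function.update ρ qs.length b)

/-- Variables of a Boolean formula are `< m`. -/
def BForm.varsLT (m : ℕ) : BForm ℕ → Prop
  | BForm.tru => True
  | BForm.fls => True
  | BForm.var i => i < m
  | BForm.not f => f.varsLT m
  | BForm.and f g => f.varsLT m ∧ g.varsLT m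
  | BForm.or f g => f.varsLT m ∧ g.varsLT m

/-- A prenex quantified Boolean formula with `quants.length` variables. -/
structure QBFInst where
  quants : List Bool
  matrix : BForm ℕ
  wf : matrix.varsLT quants.length

def QBFInst.IsTrue (Q : QBFInst) : Prop :=
  qbfHolds Q.matrix Q.quants (fun _ => false)

def encodeQBFInst (Q : QBFInst) : List Bool :=
  Nat.bits (Encodable.encode (Q.quants, Q.matrix.toNat))

end NCRSPPaper


namespace NCRSPPaper

section Machinery

open MeasureTheory

set_option linter.unusedSectionVars false

variable {k : ℕ} {V : Type} [Fintype V] [DecidableEq V] [Nonempty V]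

/-- The premeasure used in `PrFrom`. -/
noncomputable def preM (A : Arena k V) (σ : Profile k V) (s : V) : Set (Play V) → ℝ≥0∞ :=
  open scoped Classical in
  fun S => if S = ∅ then 0
           else ⨅ (w : List V) (_ : S ⊆ cyl w), wordProbFrom A σ s w

lemma PrFrom_eq (A : Arena k V) (σ : Profile k V) (s : V) (O : Set (Play V)) :
    PrFrom A σ s O = MeasureTheory.OuterMeasure.ofFunction (preM A σ s) (by simp [preM]) O := rfl

lemma mem_cyl {w : List V} {π : Play V} :
    π ∈ cyl w ↔ ∀ i (h : i < w.length), π i = w.get ⟨i, h⟩ := Iff.rfl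

lemma cyl_nil : (cyl ([] : List V)) = Set.univ := by
  ext π; simp [cyl]

lemma preM_le_word (A : Arena k V) (σ : Profile k V) (s : V) {O : Set (Play V)} {w : List V}
    (h : O ⊆ cyl w) : preM A σ s O ≤ wordProbFrom A σ s w := by
  classical
  rw [preM]
  split
  · exact zero_le
  · exact iInf₂_le w h

lemma prFrom_le_word (A : Arena k V) (σ : Profile k V) (s : V) {O : Set (Play V)} {w : List V}
    (h : O ⊆ cyl w) : PrFrom A σ s O ≤ wordProbFrom A σ s w := by
  rw [PrFrom_eq]
  exact (OuterMeasure.ofFunction_le O).trans (preM_le_word A σ s h)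

lemma prFrom_le_one (A : Arena k V) (σ : Profile k V) (s : V) (O : Set (Play V)) :
    PrFrom A σ s O ≤ 1 := by
  have h : O ⊆ cyl ([] : List V) := by rw [cyl_nil]; exact Set.subset_univ _
  simpa [wordProbFrom] using prFrom_le_word A σ s h

lemma prFrom_mono (A : Arena k V) (σ : Profile k V) (s : V) {O O' : Set (Play V)}
    (h : O ⊆ O') : PrFrom A σ s O ≤ PrFrom A σ s O' := by
  rw [PrFrom_eq, PrFrom_eq]; exact measure_mono h

lemma prFrom_iUnion_le (A : Arena k V) (σ : Profile k V) (s : V) {ι : Type} [Countable ι]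
    (S : ι → Set (Play V)) : PrFrom A σ s (⋃ i, S i) ≤ ∑' i, PrFrom A σ s (S i) := by
  simp only [PrFrom_eq]; exact measure_iUnion_le S

lemma prFrom_union_le (A : Arena k V) (σ : Profile k V) (s : V) (O O' : Set (Play V)) :
    PrFrom A σ s (O ∪ O') ≤ PrFrom A σ s O + PrFrom A σ s O' := by
  simp only [PrFrom_eq]; exact measure_union_le O O'

/-! ### positivity decompositions -/

lemma extProb_cons (A : Arena k V) (σ : Profile k V) (hist : List V) (u v : V) (rest : List V) :
    extProb A σ hist u (v :: rest) =
      A.stepProb σ hist u v * extProb A σ (hist ++ [u]) v rest := rfl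

lemma wordProb_cons (A : Arena k V) (σ : Profile k V) (s v : V) (rest : List V) :
    wordProbFrom A σ s (v :: rest) =
      (if v = s then 1 else 0) * extProb A σ [] v rest := rfl

/-! ### mass conservation -/

lemma stepProb_sum (A : Arena k V) (σ : Profile k V)
    (howner : ∀ u, A.owner u ≠ none) (hist : List V) (u : V) :
    ∑ v, A.stepProb σ hist u v = 1 := by
  cases h : A.owner u with
  | none => exact absurd h (howner u)
  | some i =>
    have : ∀ v, A.stepProb σ hist u v = σ i hist u v := by
      intro v; simp [Arena.stepProb, h]
    simp only [this]
    rw [← tsum_fintype (L := SummationFilter.unconditional _)]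
    exact (σ i hist u).tsum_coe

lemma extProb_ofFn_sum (A : Arena k V) (σ : Profile k V)
    (howner : ∀ u, A.owner u ≠ none) :
    ∀ (d : ℕ) (hist : List V) (u : V),
      ∑ g : Fin d → V, extProb A σ hist u (List.ofFn g) = 1 := by
  intro d
  induction d with
  | zero =>
    intro hist u
    simp [extProb]
  | succ d ih =>
    intro hist u
    have step1 : ∀ g : Fin (d+1) → V,
        extProb A σ hist u (List.ofFn g)
          = A.stepProb σ hist u (g 0) *
              extProb A σ (hist ++ [u]) (g 0) (List.ofFn (fun i => g i.succ)) := by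
      intro g; rw [List.ofFn_succ]; rfl
    rw [Fintype.sum_equiv (Fin.consEquiv fun _ : Fin (d+1) => V).symm
      (fun g => extProb A σ hist u (List.ofFn g))
      (fun x => A.stepProb σ hist u x.1 *
        extProb A σ (hist ++ [u]) x.1 (List.ofFn x.2))
      (fun g => step1 g)]
    rw [Fintype.sum_prod_type]
    have : ∀ v : V, ∑ h : Fin d → V,
        A.stepProb σ hist u v * extProb A σ (hist ++ [u]) v (List.ofFn h)
        = A.stepProb σ hist u v := by
      intro v
      rw [← Finset.mul_sum, ih (hist ++ [u]) v, mul_one]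
    simp only [this]
    exact stepProb_sum A σ howner hist u

lemma extProb_append_ofFn_sum (A : Arena k V) (σ : Profile k V)
    (howner : ∀ u, A.owner u ≠ none) (d : ℕ) :
    ∀ (l : List V) (hist : List V) (u : V),
      ∑ g : Fin d → V, extProb A σ hist u (l ++ List.ofFn g) = extProb A σ hist u l := by
  intro l
  induction l with
  | nil =>
    intro hist u
    simpa [extProb] using extProb_ofFn_sum A σ howner d hist u
  | cons a l ih =>
    intro hist u
    have : ∀ g : Fin d → V, extProb A σ hist u ((a :: l) ++ List.ofFn g)
        = A.stepProb σ hist u a * extProb A σ (hist ++ [u]) a (l ++ List.ofFn g) := fun g => rfl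
    simp only [this]
    rw [← Finset.mul_sum, ih (hist ++ [u]) a]
    rfl

lemma wordProb_append_ofFn_sum (A : Arena k V) (σ : Profile k V) (s : V)
    (howner : ∀ u, A.owner u ≠ none) (d : ℕ) (w : List V) :
    ∑ g : Fin d → V, wordProbFrom A σ s (w ++ List.ofFn g) = wordProbFrom A σ s w := by
  cases w with
  | nil =>
    cases d with
    | zero => simp [wordProbFrom]
    | succ d =>
      have step1 : ∀ g : Fin (d+1) → V,
          wordProbFrom A σ s ([] ++ List.ofFn g)
            = (if g 0 = s then 1 else 0) *
                extProb A σ [] (g 0) (List.ofFn (fun i => g i.succ)) := by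
        intro g
        rw [List.nil_append, List.ofFn_succ]
        rfl
      rw [Fintype.sum_equiv (Fin.consEquiv fun _ : Fin (d+1) => V).symm
        (fun g : Fin (d+1) → V => wordProbFrom A σ s ([] ++ List.ofFn g))
        (fun x => (if x.1 = s then 1 else 0) *
          extProb A σ [] x.1 (List.ofFn x.2)) (fun g => step1 g)]
      rw [Fintype.sum_prod_type]
      have : ∀ v : V, ∑ h : Fin d → V,
          (if v = s then 1 else 0) * extProb A σ [] v (List.ofFn h)
          = (if v = s then 1 else 0) := by
        intro v
        rw [← Finset.mul_sum, extProb_ofFn_sum A σ howner d [] v, mul_one]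
      simp only [this]
      simp [wordProbFrom]
  | cons a l =>
    have : ∀ g : Fin d → V, wordProbFrom A σ s ((a :: l) ++ List.ofFn g)
        = (if a = s then 1 else 0) * extProb A σ [] a (l ++ List.ofFn g) := fun g => rfl
    simp only [this]
    rw [← Finset.mul_sum, extProb_append_ofFn_sum A σ howner d l [] a]
    rfl

end Machinery

end NCRSPPaper

namespace NCRSPPaper

section Machinery2

open MeasureTheory

set_option linter.unusedSectionVars false

variable {k : ℕ} {V : Type} [Fintype V] [DecidableEq V] [Nonempty V]

lemma tsum_prefix (A : Arena k V) (σ : Profile k V) (s : V)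
    (howner : ∀ u, A.owner u ≠ none) (w : List V) (L : ℕ) (hw : w.length ≤ L) :
    ∑' (g : {g : Fin L → V // w <+: List.ofFn g}), wordProbFrom A σ s (List.ofFn g.1)
      = wordProbFrom A σ s w := by
  obtain ⟨d, rfl⟩ := Nat.exists_eq_add_of_le hw
  -- build the equivalence
  let E : (Fin d → V) ≃ {g : Fin (w.length + d) → V // w <+: List.ofFn g} :=
    { toFun := fun h => ⟨Fin.append w.get h, by
        rw [List.ofFn_fin_append, List.ofFn_get]
        exact List.prefix_append w _⟩
      invFun := fun g i => g.1 (Fin.natAdd w.length i)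
      left_inv := by
        intro h; funext i; exact Fin.append_right _ _ i
      right_inv := by
        intro ⟨g, hg⟩
        apply Subtype.ext
        show Fin.append w.get (fun i => g (Fin.natAdd w.length i)) = g
        funext i
        refine Fin.addCases (fun i => ?_) (fun i => ?_) i
        · rw [Fin.append_left]
          have h3 := hg.getElem (i := (i : ℕ)) i.isLt
          rw [List.getElem_ofFn] at h3
          rw [List.get_eq_getElem, h3]
          exact congrArg g (by apply Fin.ext; simp)
        · exact Fin.append_right _ _ i }
  rw [← Equiv.tsum_eq E (fun g => wordProbFrom A σ s (List.ofFn g.1))]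
  have hval : ∀ h : Fin d → V,
      wordProbFrom A σ s (List.ofFn (E h).1) = wordProbFrom A σ s (w ++ List.ofFn h) := by
    intro h
    show wordProbFrom A σ s (List.ofFn (Fin.append w.get h)) = _
    rw [List.ofFn_fin_append, List.ofFn_get]
  rw [tsum_congr hval, tsum_fintype]
  exact wordProb_append_ofFn_sum A σ s howner d w

lemma one_le_finite_cover (A : Arena k V) (σ : Profile k V) (s : V)
    (howner : ∀ u, A.owner u ≠ none) {ι : Type} (t : Finset ι) (W : ι → List V)
    (hcov : ∀ π : Play V, ∃ j ∈ t, π ∈ cyl (W j)) :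
    1 ≤ ∑ j ∈ t, wordProbFrom A σ s (W j) := by
  classical
  set L := t.sup fun j => (W j).length with hL
  have hlen : ∀ j ∈ t, (W j).length ≤ L := fun j hj =>
    Finset.le_sup (f := fun j => (W j).length) hj
  -- the covering at the level of length-L words
  have key : ∀ g : Fin L → V, ∃ j ∈ t, W j <+: List.ofFn g := by
    intro g
    set π : Play V := fun n => if h : n < L then g ⟨n, h⟩ else Classical.arbitrary V with hπ
    obtain ⟨j, hj, hmem⟩ := hcov π
    refine ⟨j, hj, ?_⟩
    rw [List.prefix_iff_eq_take]
    apply List.ext_get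
    · rw [List.length_take, List.length_ofFn, Nat.min_eq_left (hlen j hj)]
    · intro n h1 h2
      have hn : n < (W j).length := h1
      have hnL : n < L := lt_of_lt_of_le hn (hlen j hj)
      rw [List.get_eq_getElem (l := List.take _ _), List.getElem_take]
      have := (hmem n hn).symm
      rw [this]
      simp only [hπ]
      rw [dif_pos hnL]
      simp
  -- sum over all length-L words
  have hmass : ∑' (g : Fin L → V), wordProbFrom A σ s (List.ofFn g) = 1 := by
    rw [tsum_fintype]
    simpa [wordProbFrom] using wordProb_append_ofFn_sum A σ s howner L []
  have hsub : (Set.univ : Set (Fin L → V)) ⊆ ⋃ j ∈ t, {g : Fin L → V | W j <+: List.ofFn g} := by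
    intro g _
    obtain ⟨j, hj, hpre⟩ := key g
    exact Set.mem_biUnion hj hpre
  calc (1 : ℝ≥0∞) = ∑' (g : Fin L → V), wordProbFrom A σ s (List.ofFn g) := hmass.symm
    _ = ∑' (g : (Set.univ : Set (Fin L → V))), wordProbFrom A σ s (List.ofFn g.1) :=
        (tsum_univ _).symm
    _ ≤ ∑' (g : (⋃ j ∈ t, {g : Fin L → V | W j <+: List.ofFn g} : Set (Fin L → V))),
          wordProbFrom A σ s (List.ofFn g.1) :=
        ENNReal.tsum_mono_subtype (fun g : Fin L → V => wordProbFrom A σ s (List.ofFn g)) hsub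
    _ ≤ ∑ j ∈ t, ∑' (g : ({g : Fin L → V | W j <+: List.ofFn g} : Set (Fin L → V))),
          wordProbFrom A σ s (List.ofFn g.1) :=
        ENNReal.tsum_biUnion_le (fun g : Fin L → V => wordProbFrom A σ s (List.ofFn g)) t
          (fun j => {g : Fin L → V | W j <+: List.ofFn g})
    _ = ∑ j ∈ t, wordProbFrom A σ s (W j) := by
        apply Finset.sum_congr rfl
        intro j hj
        exact tsum_prefix A σ s howner (W j) L (hlen j hj)

lemma one_le_prFrom_univ (A : Arena k V) (σ : Profile k V) (s : V)
    (howner : ∀ u, A.owner u ≠ none) :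
    1 ≤ PrFrom A σ s Set.univ := by
  classical
  rw [PrFrom_eq, OuterMeasure.ofFunction_apply]
  refine le_iInf₂ fun f hf => ?_
  by_cases htop : ∑' n, preM A σ s (f n) = ⊤
  · rw [htop]; exact le_top
  apply ENNReal.le_of_forall_pos_le_add
  intro ε hε _
  obtain ⟨δ, hδpos, hδsum⟩ :=
    ENNReal.exists_pos_sum_of_countable (ε := (ε : ℝ≥0∞)) (by exact_mod_cast hε.ne') ℕ
  have hchoice : ∀ n : ℕ, ∃ w : List V,
      f n ≠ ∅ → (f n ⊆ cyl w ∧ wordProbFrom A σ s w ≤ preM A σ s (f n) + δ n) := by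
    intro n
    by_cases hne : f n = ∅
    · exact ⟨[], fun h => absurd hne h⟩
    · have hlt : preM A σ s (f n) < preM A σ s (f n) + δ n := by
        refine ENNReal.lt_add_right ?_ (by exact_mod_cast (hδpos n).ne')
        exact ne_top_of_le_ne_top htop (ENNReal.le_tsum n)
      rw [show preM A σ s (f n) = ⨅ (w : List V) (_ : f n ⊆ cyl w), wordProbFrom A σ s w
        from if_neg hne] at hlt
      obtain ⟨w, hwlt⟩ := iInf_lt_iff.mp hlt
      obtain ⟨hw, hwlt⟩ := iInf_lt_iff.mp hwlt
      refine ⟨w, fun _ => ⟨hw, ?_⟩⟩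
      rw [show preM A σ s (f n) = ⨅ (w : List V) (_ : f n ⊆ cyl w), wordProbFrom A σ s w
        from if_neg hne]
      exact hwlt.le
  choose Wn hWn using hchoice
  have hcov : ∀ π : Play V, ∃ n : {n : ℕ // f n ≠ ∅}, π ∈ cyl (Wn n.1) := by
    intro π
    obtain ⟨n, hn⟩ := Set.mem_iUnion.mp (hf (Set.mem_univ π))
    have hne : f n ≠ ∅ := Set.nonempty_iff_ne_empty.mp ⟨π, hn⟩
    exact ⟨⟨n, hne⟩, (hWn n hne).1 hn⟩
  letI : TopologicalSpace V := ⊥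
  haveI : DiscreteTopology V := ⟨rfl⟩
  have hopen : ∀ n : {n : ℕ // f n ≠ ∅}, IsOpen (cyl (Wn n.1) : Set (Play V)) := by
    intro n
    have hrw : (cyl (Wn n.1) : Set (Play V))
        = ⋂ i : Fin (Wn n.1).length, {π : Play V | π i = (Wn n.1).get i} := by
      ext π
      constructor
      · intro h; exact Set.mem_iInter.mpr fun i => h i i.isLt
      · intro h i hi; exact Set.mem_iInter.mp h ⟨i, hi⟩
    rw [hrw]
    refine isOpen_iInter_of_finite fun i => ?_
    have : {π : Play V | π i = (Wn n.1).get i}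
        = (fun π : Play V => π (i : ℕ)) ⁻¹' {(Wn n.1).get i} := rfl
    rw [this]
    exact (continuous_apply (i : ℕ)).isOpen_preimage _ (isOpen_discrete _)
  obtain ⟨t, ht⟩ := IsCompact.elim_finite_subcover isCompact_univ
    (fun n : {n : ℕ // f n ≠ ∅} => (cyl (Wn n.1) : Set (Play V))) hopen
    (fun π _ => Set.mem_iUnion.mpr (hcov π))
  have h1 : 1 ≤ ∑ j ∈ t, wordProbFrom A σ s (Wn j.1) := by
    refine one_le_finite_cover A σ s howner t (fun j => Wn j.1) fun π => ?_
    have := ht (Set.mem_univ π)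
    rw [Set.mem_iUnion₂] at this
    obtain ⟨j, hj, hmem⟩ := this
    exact ⟨j, hj, hmem⟩
  have h2 : ∑ j ∈ t, wordProbFrom A σ s (Wn j.1)
      ≤ ∑ j ∈ t, (preM A σ s (f j.1) + δ j.1) :=
    Finset.sum_le_sum fun j _ => (hWn j.1 j.2).2
  have h3 : ∑ j ∈ t, (preM A σ s (f j.1) + (δ j.1 : ℝ≥0∞))
      = ∑ j ∈ t, preM A σ s (f j.1) + ∑ j ∈ t, (δ j.1 : ℝ≥0∞) := Finset.sum_add_distrib
  have h4 : ∑ j ∈ t, preM A σ s (f j.1) ≤ ∑' n, preM A σ s (f n) :=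
    (ENNReal.sum_le_tsum t).trans
      (ENNReal.tsum_comp_le_tsum_of_injective Subtype.val_injective _)
  have h5 : ∑ j ∈ t, (δ j.1 : ℝ≥0∞) ≤ (ε : ℝ≥0∞) :=
    ((ENNReal.sum_le_tsum t).trans
      (ENNReal.tsum_comp_le_tsum_of_injective Subtype.val_injective _)).trans hδsum.le
  calc (1 : ℝ≥0∞) ≤ _ := h1
    _ ≤ _ := h2
    _ = _ := h3
    _ ≤ ∑' n, preM A σ s (f n) + (ε : ℝ≥0∞) := add_le_add h4 h5

end Machinery2

end NCRSPPaper

namespace NCRSPPaper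

section Machinery3

open MeasureTheory

set_option linter.unusedSectionVars false

variable {k : ℕ} {V : Type} [Fintype V] [DecidableEq V] [Nonempty V]

lemma extProb_ne_zero_cons (A : Arena k V) (σ : Profile k V) {hist : List V} {u v : V}
    {rest : List V} (h : extProb A σ hist u (v :: rest) ≠ 0) :
    A.stepProb σ hist u v ≠ 0 ∧ extProb A σ (hist ++ [u]) v rest ≠ 0 := by
  rw [extProb_cons] at h
  exact mul_ne_zero_iff.mp h

lemma wordProb_ne_zero_cons (A : Arena k V) (σ : Profile k V) {s v : V} {rest : List V}
    (h : wordProbFrom A σ s (v :: rest) ≠ 0) :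
    v = s ∧ extProb A σ [] v rest ≠ 0 := by
  rw [wordProb_cons] at h
  obtain ⟨h1, h2⟩ := mul_ne_zero_iff.mp h
  refine ⟨?_, h2⟩
  by_contra hv
  simp [hv] at h1

lemma prFrom_trObjS_eq_zero (A : Arena k V) (σ : Profile k V) (s : V) (Fs : Set V)
    (Good : List V → V → Prop)
    (h0 : Good [] s)
    (hstep : ∀ hist u v, Good hist u → A.stepProb σ hist u v ≠ 0 → Good (hist ++ [u]) v)
    (hF : ∀ hist u, Good hist u → u ∉ Fs) :
    PrFrom A σ s (trObjS Fs) = 0 := by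
  classical
  refine le_antisymm ?_ (zero_le)
  -- any word ending in `Fs` has zero probability
  have key : ∀ (l hist : List V) (u v : V), Good hist u → v ∈ Fs →
      extProb A σ hist u (l ++ [v]) ≠ 0 → False := by
    intro l
    induction l with
    | nil =>
      intro hist u v hG hv h
      obtain ⟨h1, _⟩ := extProb_ne_zero_cons A σ h
      exact hF _ _ (hstep hist u v hG h1) hv
    | cons x l ih =>
      intro hist u v hG hv h
      obtain ⟨h1, h2⟩ := extProb_ne_zero_cons A σ h
      exact ih (hist ++ [u]) x v (hstep hist u x hG h1) hv h2
  have pword : ∀ (w : List V) (v : V), v ∈ Fs → wordProbFrom A σ s (w ++ [v]) = 0 := by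
    intro w v hv
    by_contra hp
    cases w with
    | nil =>
      obtain ⟨rfl, _⟩ := wordProb_ne_zero_cons A σ hp
      exact hF [] v h0 hv
    | cons a w' =>
      obtain ⟨rfl, h2⟩ := wordProb_ne_zero_cons A σ hp
      exact key w' [] a v h0 hv h2
  have hcov : trObjS Fs ⊆ ⋃ x : List V × ↥Fs, cyl (x.1 ++ [x.2.1]) := by
    rintro π ⟨m, hm⟩
    have hmem : π ∈ cyl ((List.ofFn fun i : Fin m => π (i : ℕ)) ++ [π m]) := by
      intro i hi
      have hlen : (List.ofFn fun i : Fin m => π (i : ℕ)).length = m := List.length_ofFn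
      rcases Nat.lt_or_ge i m with h' | h'
      · rw [List.get_eq_getElem, List.getElem_append_left (by rw [hlen]; exact h'),
          List.getElem_ofFn]
      · have him : i = m := by
          rw [List.length_append, hlen, List.length_cons, List.length_nil] at hi
          omega
        subst him
        rw [List.get_eq_getElem, List.getElem_append_right (by rw [hlen])]
        simp [hlen]
    exact Set.mem_iUnion.mpr ⟨(List.ofFn fun i : Fin m => π (i : ℕ), ⟨π m, hm⟩), hmem⟩
  calc PrFrom A σ s (trObjS Fs)
      ≤ PrFrom A σ s (⋃ x : List V × ↥Fs, cyl (x.1 ++ [x.2.1])) := prFrom_mono A σ s hcov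
    _ ≤ ∑' x : List V × ↥Fs, PrFrom A σ s (cyl (x.1 ++ [x.2.1])) := prFrom_iUnion_le A σ s _
    _ ≤ ∑' x : List V × ↥Fs, wordProbFrom A σ s (x.1 ++ [x.2.1]) :=
        ENNReal.tsum_le_tsum fun x => prFrom_le_word A σ s (subset_refl _)
    _ = 0 := by
        apply ENNReal.tsum_eq_zero.mpr
        intro x
        exact pword x.1 x.2.1 x.2.2


end Machinery3

end NCRSPPaper

namespace NCRSPPaper

section Machinery3b

open MeasureTheory

set_option linter.unusedSectionVars false

variable {k : ℕ} {V : Type} [Fintype V] [DecidableEq V] [Nonempty V]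

lemma one_le_prFrom_trObjS_add (A : Arena k V) (σ : Profile k V) (s : V)
    (howner : ∀ u, A.owner u ≠ none) (m : ℕ) (Fs : Set V) [DecidablePred (· ∈ Fs)] :
    1 ≤ PrFrom A σ s (trObjS Fs) +
      ∑ g : Fin (m+1) → V,
        (if g (Fin.last m) ∈ Fs then 0 else wordProbFrom A σ s (List.ofFn g)) := by
  have hc : ((trObjS Fs)ᶜ : Set (Play V)) ⊆
      ⋃ g : Fin (m+1) → V,
        (if g (Fin.last m) ∈ Fs then (∅ : Set (Play V)) else cyl (List.ofFn g)) := by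
    intro π hπ
    have hnot : ∀ j : ℕ, π j ∉ Fs := fun j hj => hπ ⟨j, hj⟩
    refine Set.mem_iUnion.mpr ⟨fun i => π i, ?_⟩
    have hcond : ((fun i : Fin (m+1) => π (i : ℕ)) (Fin.last m)) ∉ Fs := hnot m
    rw [if_neg hcond]
    intro i hi
    rw [List.get_eq_getElem, List.getElem_ofFn]
  have h2 : PrFrom A σ s ((trObjS Fs)ᶜ) ≤
      ∑ g : Fin (m+1) → V,
        (if g (Fin.last m) ∈ Fs then 0 else wordProbFrom A σ s (List.ofFn g)) := by
    calc PrFrom A σ s ((trObjS Fs)ᶜ)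
        ≤ PrFrom A σ s (⋃ g : Fin (m+1) → V,
            (if g (Fin.last m) ∈ Fs then (∅ : Set (Play V)) else cyl (List.ofFn g))) :=
          prFrom_mono A σ s hc
      _ ≤ ∑' g : Fin (m+1) → V, PrFrom A σ s
            (if g (Fin.last m) ∈ Fs then (∅ : Set (Play V)) else cyl (List.ofFn g)) :=
          prFrom_iUnion_le A σ s _
      _ = ∑ g : Fin (m+1) → V, PrFrom A σ s
            (if g (Fin.last m) ∈ Fs then (∅ : Set (Play V)) else cyl (List.ofFn g)) :=
          tsum_fintype _
      _ ≤ ∑ g : Fin (m+1) → V,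
            (if g (Fin.last m) ∈ Fs then 0 else wordProbFrom A σ s (List.ofFn g)) := by
          refine Finset.sum_le_sum fun g _ => ?_
          split
          · rw [PrFrom_eq]
            simp
          · exact prFrom_le_word A σ s (subset_refl _)
  calc (1 : ℝ≥0∞) ≤ PrFrom A σ s Set.univ := one_le_prFrom_univ A σ s howner
    _ = PrFrom A σ s (trObjS Fs ∪ (trObjS Fs)ᶜ) := by rw [Set.union_compl_self]
    _ ≤ PrFrom A σ s (trObjS Fs) + PrFrom A σ s ((trObjS Fs)ᶜ) := prFrom_union_le A σ s _ _
    _ ≤ _ := add_le_add_right h2 _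

lemma one_le_prFrom_trObjS (A : Arena k V) (σ : Profile k V) (s : V)
    (howner : ∀ u, A.owner u ≠ none) (m : ℕ) (Fs : Set V) [DecidablePred (· ∈ Fs)]
    (hall : ∀ g : Fin (m+1) → V, wordProbFrom A σ s (List.ofFn g) ≠ 0 → g (Fin.last m) ∈ Fs) :
    1 ≤ PrFrom A σ s (trObjS Fs) := by
  have h := one_le_prFrom_trObjS_add A σ s howner m Fs
  rwa [Finset.sum_eq_zero, add_zero] at h
  intro g _
  split
  · rfl
  · rename_i hg
    by_contra hne
    exact hg (hall g hne)

end Machinery3b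

end NCRSPPaper

namespace NCRSPPaper

namespace Ex1

/-- Successor lists of the Example-1 arena: `0 = v₀` (player 1),
`1 = v₁` (player 2), `2 = v_a` (player 0 / system), `3 = t_a (0,0,0)`,
`4 = t_b (0,1,0)`, `5 = t₁ (1,1,0)`, `6 = t₂ (1,0,1)`. -/
def nexts : Fin 7 → List (Fin 7) := ![[1, 3], [2, 4], [5, 6], [3], [4], [5], [6]]

def GA : Arena 2 (Fin 7) where
  owner v := if v = 0 then some 1 else if v = 1 then some 2 else some 0
  edge u v := decide (v ∈ nexts u)
  prob _ _ := 0
  init := 0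

def FF : Fin 3 → Fin 7 → Bool :=
  ![fun v => v = 5 || v = 6, fun v => v = 4 || v = 5, fun v => v = 6]

lemma owner_ne : ∀ u : Fin 7, GA.owner u ≠ none := by decide

lemma mem_next {u v : Fin 7} : v ∈ GA.next u ↔ v ∈ nexts u := by
  have h := owner_ne u
  simp only [Arena.next, Set.mem_setOf_eq, GA]
  constructor
  · rintro (⟨h1, _⟩ | ⟨_, h2⟩)
    · exact absurd h1 h
    · exact of_decide_eq_true h2
  · intro hv
    exact Or.inr ⟨h, decide_eq_true hv⟩

lemma GA_wf : GA.WF := by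
  constructor
  · intro u
    have : ∀ u : Fin 7, (![1,2,5,3,4,5,6] : Fin 7 → Fin 7) u ∈ nexts u := by decide
    exact ⟨_, mem_next.mpr (this u)⟩
  · intro u hu
    exact absurd hu (owner_ne u)

lemma terminal_of (v : Fin 7) (hv : v ∈ ([3,4,5,6] : List (Fin 7))) : GA.terminal v := by
  have hx : nexts v = [v] := by fin_cases hv <;> rfl
  apply Set.ext
  intro x
  rw [Set.mem_singleton_iff, mem_next, hx]
  simp

lemma GA_hterm : ∀ i v, FF i v = true → GA.terminal v := by
  intro i v h
  apply terminal_of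
  revert h
  fin_cases i <;> fin_cases v <;> decide

/-! ### strategies -/

noncomputable def pureS (c : Fin 7 → Fin 7) : Strategy (Fin 7) := fun _ u => PMF.pure (c u)

lemma pmf_zero {α : Type*} {p : PMF α} {c v : α} (hc : p c = 1) (hv : v ≠ c) : p v = 0 := by
  rw [PMF.apply_eq_zero_iff, (p.apply_eq_one_iff c).mp hc]
  simpa using hv

lemma pureS_apply_ne (c : Fin 7 → Fin 7) {hist : List (Fin 7)} {u v : Fin 7}
    (h : pureS c hist u v ≠ 0) : v = c u := by
  by_contra hv
  exact h (by simp [pureS, PMF.pure_apply, hv])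

lemma pureS_valid (c : Fin 7 → Fin 7) (hc : ∀ u, c u ∈ nexts u) :
    Strategy.Valid GA (pureS c) := by
  intro hist u v hv
  rw [pureS_apply_ne c hv]
  exact mem_next.mpr (hc u)

lemma pureS_positional (c : Fin 7 → Fin 7) : Strategy.Positional (pureS c) :=
  ⟨fun _ _ _ => rfl, fun _ u => ⟨c u, by simp [pureS, PMF.pure_apply]⟩⟩

noncomputable def coin : PMF (Fin 7) :=
  PMF.ofFintype ![0, 0, 0, 0, 0, 2⁻¹, 2⁻¹] (by
    simp [Fin.sum_univ_succ]
    exact ENNReal.inv_two_add_inv_two)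

lemma coin_apply_ne {v : Fin 7} (h : coin v ≠ 0) : v = 5 ∨ v = 6 := by
  revert h
  rw [coin, PMF.ofFintype_apply]
  fin_cases v <;> simp

lemma coin_five : coin 5 = 2⁻¹ := by rw [coin, PMF.ofFintype_apply]; rfl

lemma coin_six : coin 6 = 2⁻¹ := by rw [coin, PMF.ofFintype_apply]; rfl

def cGo : Fin 7 → Fin 7 := ![1, 2, 5, 3, 4, 5, 6]

/-- The mixing system strategy. -/
noncomputable def sysStar : Strategy (Fin 7) := fun _ u =>
  if u = 2 then coin else PMF.pure (cGo u)

lemma sysStar_stationary : Strategy.Stationary sysStar := fun _ _ _ => rfl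

lemma sysStar_valid : Strategy.Valid GA sysStar := by
  intro hist u v hv
  rw [sysStar] at hv
  apply mem_next.mpr
  by_cases hu : u = 2
  · subst hu
    rw [if_pos rfl] at hv
    rcases coin_apply_ne hv with rfl | rfl <;> decide
  · rw [if_neg hu] at hv
    have hvc : v = cGo u := by
      by_contra hvc
      exact hv (by simp [PMF.pure_apply, hvc])
    subst hvc
    revert hu
    fin_cases u <;> intro _ <;> decide

/-! ### step unfoldings -/

lemma step_at_0 (σ : Profile 2 (Fin 7)) (hist : List (Fin 7)) (v : Fin 7) :
    GA.stepProb σ hist 0 v = σ 1 hist 0 v := rfl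

lemma step_at_1 (σ : Profile 2 (Fin 7)) (hist : List (Fin 7)) (v : Fin 7) :
    GA.stepProb σ hist 1 v = σ 2 hist 1 v := rfl

lemma step_at_sys (σ : Profile 2 (Fin 7)) (u : Fin 7) (hu : u ∈ ([2,3,4,5,6] : List (Fin 7)))
    (hist : List (Fin 7)) (v : Fin 7) :
    GA.stepProb σ hist u v = σ 0 hist u v := by
  fin_cases hu <;> rfl

lemma step_terminal (σ : Profile 2 (Fin 7)) (hσ : Profile.Valid GA σ) (u : Fin 7)
    (hu : u ∈ ([3,4,5,6] : List (Fin 7))) (hist : List (Fin 7)) (v : Fin 7)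
    (h : GA.stepProb σ hist u v ≠ 0) : v = u := by
  have hn : nexts u = [u] := by fin_cases hu <;> rfl
  have hv : v ∈ GA.next u := by
    rw [step_at_sys σ u (by fin_cases hu <;> decide)] at h
    exact hσ 0 hist u v h
  rw [mem_next, hn] at hv
  simpa using hv

lemma ofFn3 (g : Fin 3 → Fin 7) : List.ofFn g = [g 0, g 1, g 2] := rfl

lemma ofFn4 (g : Fin 4 → Fin 7) : List.ofFn g = [g 0, g 1, g 2, g 3] := rfl

end Ex1

end NCRSPPaper

namespace NCRSPPaper

namespace Ex1

lemma pay_eq (σ : Profile 2 (Fin 7)) (i : Fin 3) :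
    Pay GA (fun j => trObj (FF j)) σ i
      = PrFrom GA σ 0 (trObjS {v : Fin 7 | FF i v = true}) := rfl

lemma half_le_of_LB {x : ℝ≥0∞} (h : 1 ≤ x + 2⁻¹) : 2⁻¹ ≤ x := by
  have h2 : (1 : ℝ≥0∞) - 2⁻¹ = 2⁻¹ := by
    conv_lhs => rw [← ENNReal.inv_two_add_inv_two]
    rw [ENNReal.add_sub_cancel_right (by simp)]
  calc (2⁻¹ : ℝ≥0∞) = 1 - 2⁻¹ := h2.symm
    _ ≤ x := tsub_le_iff_right.mpr h

lemma partA : NCRSPAnswer GA (fun i => trObj (FF i)) Strategy.Stationary Strategy.Positional 1 := by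
  refine ⟨sysStar, sysStar_valid, sysStar_stationary, ?_⟩
  intro σ h0 hval henv hZNE
  rw [show ENNReal.ofReal ((1:ℚ):ℝ) = (1:ℝ≥0∞) by simp]
  obtain ⟨hstat1, hpure1⟩ := henv 1 (by decide)
  obtain ⟨hstat2, hpure2⟩ := henv 2 (by decide)
  obtain ⟨c1, hc1⟩ := hpure1 [] 0
  obtain ⟨c2, hc2⟩ := hpure2 [] 1
  have hc1mem : c1 = 1 ∨ c1 = 3 := by
    have := mem_next.mp (hval 1 [] 0 c1 (by rw [hc1]; exact one_ne_zero))
    simpa [nexts] using this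
  have hc2mem : c2 = 2 ∨ c2 = 4 := by
    have := mem_next.mp (hval 2 [] 1 c2 (by rw [hc2]; exact one_ne_zero))
    simpa [nexts] using this
  have hstepA : ∀ hist (v : Fin 7), GA.stepProb σ hist 0 v ≠ 0 → v = c1 := by
    intro hist v hv
    rw [step_at_0, hstat1 hist []] at hv
    by_contra h
    exact hv (pmf_zero hc1 h)
  have hstepB : ∀ hist (v : Fin 7), GA.stepProb σ hist 1 v ≠ 0 → v = c2 := by
    intro hist v hv
    rw [step_at_1, hstat2 hist []] at hv
    by_contra h
    exact hv (pmf_zero hc2 h)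
  have hstepV : ∀ hist (v : Fin 7), GA.stepProb σ hist 2 v ≠ 0 → v = 5 ∨ v = 6 := by
    intro hist v hv
    rw [step_at_sys σ 2 (by decide), h0] at hv
    exact coin_apply_ne (by simpa [sysStar] using hv)
  rcases hc1mem with rfl | rfl
  · rcases hc2mem with rfl | rfl
    · -- compliant profile: payoff 1
      have key : ∀ g : Fin 4 → Fin 7, wordProbFrom GA σ 0 (List.ofFn g) ≠ 0 →
          g (Fin.last 3) ∈ {v : Fin 7 | FF 0 v = true} := by
        intro g hg
        rw [ofFn4] at hg
        obtain ⟨hg0, hg⟩ := wordProb_ne_zero_cons GA σ hg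
        obtain ⟨hs1, hg⟩ := extProb_ne_zero_cons GA σ hg
        obtain ⟨hs2, hg⟩ := extProb_ne_zero_cons GA σ hg
        obtain ⟨hs3, -⟩ := extProb_ne_zero_cons GA σ hg
        rw [hg0] at hs1
        have h1 : g 1 = 1 := hstepA _ _ hs1
        rw [h1] at hs2
        have h2 : g 2 = 2 := hstepB _ _ hs2
        rw [h2] at hs3
        have h3 := hstepV _ _ hs3
        show FF 0 (g (Fin.last 3)) = true
        have hl : g (Fin.last 3) = g 3 := rfl
        rw [hl]
        rcases h3 with h | h <;> rw [h] <;> rfl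
      rw [pay_eq]
      exact one_le_prFrom_trObjS GA σ 0 owner_ne 3 _ key
    · -- player 2 blocks: she deviates profitably, contradiction with 0NE
      exfalso
      have hdev := hZNE 2 (by decide) (pureS cGo) (pureS_valid cGo (by decide))
      have hzero : Pay GA (fun j => trObj (FF j)) σ 2 = 0 := by
        rw [pay_eq]
        apply prFrom_trObjS_eq_zero GA σ 0 {v : Fin 7 | FF 2 v = true}
          (fun _ u => u = 0 ∨ u = 1 ∨ u = 4)
        · exact Or.inl rfl
        · intro hist u v hG hv
          rcases hG with rfl | rfl | rfl
          · exact Or.inr (Or.inl (hstepA hist v hv))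
          · exact Or.inr (Or.inr (hstepB hist v hv))
          · exact Or.inr (Or.inr (step_terminal σ hval 4 (by decide) hist v hv))
        · intro hist u hG
          rcases hG with rfl | rfl | rfl <;> simp [FF]
      set σ' := Function.update σ 2 (pureS cGo) with hσ'
      have hup0 : σ' 0 = sysStar := by
        rw [hσ', Function.update_of_ne (by decide), h0]
      have hup1 : σ' 1 = σ 1 := by rw [hσ', Function.update_of_ne (by decide)]
      have hup2 : σ' 2 = pureS cGo := by rw [hσ', Function.update_self]
      have e1 : GA.stepProb σ' [] 0 1 = 1 := by rw [step_at_0, hup1]; exact hc1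
      have e2 : GA.stepProb σ' [0] 1 2 = 1 := by
        rw [step_at_1, hup2]
        simp [pureS, PMF.pure_apply, cGo]
      have e3 : GA.stepProb σ' [0, 1] 2 5 = 2⁻¹ := by
        rw [step_at_sys σ' 2 (by decide), hup0]
        show (if (2:Fin 7) = 2 then coin else PMF.pure (cGo 2)) 5 = 2⁻¹
        rw [if_pos rfl]
        exact coin_five
      have hstepA' : ∀ hist (v : Fin 7), GA.stepProb σ' hist 0 v ≠ 0 → v = 1 := by
        intro hist v hv
        rw [step_at_0, hup1, hstat1 hist []] at hv
        by_contra h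
        exact hv (pmf_zero hc1 h)
      have hstepB' : ∀ hist (v : Fin 7), GA.stepProb σ' hist 1 v ≠ 0 → v = 2 := by
        intro hist v hv
        rw [step_at_1, hup2] at hv
        have := pureS_apply_ne cGo hv
        simpa [cGo] using this
      have hstepV' : ∀ hist (v : Fin 7), GA.stepProb σ' hist 2 v ≠ 0 → v = 5 ∨ v = 6 := by
        intro hist v hv
        rw [step_at_sys σ' 2 (by decide), hup0] at hv
        exact coin_apply_ne (by simpa [sysStar] using hv)
      have hLB := one_le_prFrom_trObjS_add GA σ' 0 owner_ne 3 {v : Fin 7 | FF 2 v = true}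
      have hsum : (∑ g : Fin 4 → Fin 7,
          if g (Fin.last 3) ∈ {v : Fin 7 | FF 2 v = true} then 0
          else wordProbFrom GA σ' 0 (List.ofFn g)) = 2⁻¹ := by
        rw [Finset.sum_eq_single_of_mem ![0,1,2,5] (Finset.mem_univ _)]
        · rw [if_neg (by simp [FF, Fin.last])]
          show wordProbFrom GA σ' 0 [0,1,2,5] = 2⁻¹
          simp only [wordProbFrom, extProb, List.nil_append, List.cons_append,
            List.singleton_append]
          rw [e1, e2, e3]
          simp
        · intro b _ hb
          split
          · rfl
          · rename_i hbF
            by_contra hbne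
            rw [ofFn4] at hbne
            obtain ⟨hb0, hg⟩ := wordProb_ne_zero_cons GA σ' hbne
            obtain ⟨hs1, hg⟩ := extProb_ne_zero_cons GA σ' hg
            obtain ⟨hs2, hg⟩ := extProb_ne_zero_cons GA σ' hg
            obtain ⟨hs3, -⟩ := extProb_ne_zero_cons GA σ' hg
            rw [hb0] at hs1
            have h1 : b 1 = 1 := hstepA' _ _ hs1
            rw [h1] at hs2
            have h2 : b 2 = 2 := hstepB' _ _ hs2
            rw [h2] at hs3
            have h3 := hstepV' _ _ hs3
            have hb3 : b 3 = 5 := by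
              rcases h3 with h | h
              · exact h
              · exfalso
                apply hbF
                show FF 2 (b (Fin.last 3)) = true
                rw [show b (Fin.last 3) = b 3 from rfl, h]
                rfl
            apply hb
            funext i
            fin_cases i <;> simp [hb0, h1, h2, hb3]
      rw [hsum] at hLB
      have hhalf := half_le_of_LB hLB
      rw [hzero] at hdev
      have : (2⁻¹ : ℝ≥0∞) ≤ 0 := le_trans hhalf (le_trans (le_of_eq (pay_eq σ' 2).symm) hdev)
      simp at this
  · -- player 1 blocks: she deviates profitably, contradiction with 0NE
    exfalso
    have hdev := hZNE 1 (by decide) (pureS cGo) (pureS_valid cGo (by decide))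
    have hzero : Pay GA (fun j => trObj (FF j)) σ 1 = 0 := by
      rw [pay_eq]
      apply prFrom_trObjS_eq_zero GA σ 0 {v : Fin 7 | FF 1 v = true}
        (fun _ u => u = 0 ∨ u = 3)
      · exact Or.inl rfl
      · intro hist u v hG hv
        rcases hG with rfl | rfl
        · exact Or.inr (hstepA hist v hv)
        · exact Or.inr (step_terminal σ hval 3 (by decide) hist v hv)
      · intro hist u hG
        rcases hG with rfl | rfl <;> simp [FF]
    set σ' := Function.update σ 1 (pureS cGo) with hσ'
    have hup0 : σ' 0 = sysStar := by
      rw [hσ', Function.update_of_ne (by decide), h0]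
    have hup1 : σ' 1 = pureS cGo := by rw [hσ', Function.update_self]
    have hup2 : σ' 2 = σ 2 := by rw [hσ', Function.update_of_ne (by decide)]
    have hstepA' : ∀ hist (v : Fin 7), GA.stepProb σ' hist 0 v ≠ 0 → v = 1 := by
      intro hist v hv
      rw [step_at_0, hup1] at hv
      have := pureS_apply_ne cGo hv
      simpa [cGo] using this
    have hstepB' : ∀ hist (v : Fin 7), GA.stepProb σ' hist 1 v ≠ 0 → v = c2 := by
      intro hist v hv
      rw [step_at_1, hup2, hstat2 hist []] at hv
      by_contra h
      exact hv (pmf_zero hc2 h)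
    have hstepV' : ∀ hist (v : Fin 7), GA.stepProb σ' hist 2 v ≠ 0 → v = 5 ∨ v = 6 := by
      intro hist v hv
      rw [step_at_sys σ' 2 (by decide), hup0] at hv
      exact coin_apply_ne (by simpa [sysStar] using hv)
    have hzero1 : (0:ℝ≥0∞) < Pay GA (fun j => trObj (FF j)) σ' 1 → False := by
      intro hpos
      rw [hzero] at hdev
      have := lt_of_lt_of_le hpos (le_trans (le_of_eq rfl) hdev)
      simp at this
    rcases hc2mem with rfl | rfl
    · -- c2 = 2 : deviation payoff ≥ 1/2
      have e1 : GA.stepProb σ' [] 0 1 = 1 := by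
        rw [step_at_0, hup1]
        simp [pureS, PMF.pure_apply, cGo]
      have e2 : GA.stepProb σ' [0] 1 2 = 1 := by
        rw [step_at_1, hup2, hstat2 [0] []]
        exact hc2
      have e3 : GA.stepProb σ' [0, 1] 2 6 = 2⁻¹ := by
        rw [step_at_sys σ' 2 (by decide), hup0]
        show (if (2:Fin 7) = 2 then coin else PMF.pure (cGo 2)) 6 = 2⁻¹
        rw [if_pos rfl]
        exact coin_six
      have hLB := one_le_prFrom_trObjS_add GA σ' 0 owner_ne 3 {v : Fin 7 | FF 1 v = true}
      have hsum : (∑ g : Fin 4 → Fin 7,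
          if g (Fin.last 3) ∈ {v : Fin 7 | FF 1 v = true} then 0
          else wordProbFrom GA σ' 0 (List.ofFn g)) = 2⁻¹ := by
        rw [Finset.sum_eq_single_of_mem ![0,1,2,6] (Finset.mem_univ _)]
        · rw [if_neg (by simp [FF, Fin.last])]
          show wordProbFrom GA σ' 0 [0,1,2,6] = 2⁻¹
          simp only [wordProbFrom, extProb, List.nil_append, List.cons_append,
            List.singleton_append]
          rw [e1, e2, e3]
          simp
        · intro b _ hb
          split
          · rfl
          · rename_i hbF
            by_contra hbne
            rw [ofFn4] at hbne
            obtain ⟨hb0, hg⟩ := wordProb_ne_zero_cons GA σ' hbne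
            obtain ⟨hs1, hg⟩ := extProb_ne_zero_cons GA σ' hg
            obtain ⟨hs2, hg⟩ := extProb_ne_zero_cons GA σ' hg
            obtain ⟨hs3, -⟩ := extProb_ne_zero_cons GA σ' hg
            rw [hb0] at hs1
            have h1 : b 1 = 1 := hstepA' _ _ hs1
            rw [h1] at hs2
            have h2 : b 2 = 2 := hstepB' _ _ hs2
            rw [h2] at hs3
            have h3 := hstepV' _ _ hs3
            have hb3 : b 3 = 6 := by
              rcases h3 with h | h
              · exfalso
                apply hbF
                show FF 1 (b (Fin.last 3)) = true
                rw [show b (Fin.last 3) = b 3 from rfl, h]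
                rfl
              · exact h
            apply hb
            funext i
            fin_cases i <;> simp [hb0, h1, h2, hb3]
      rw [hsum] at hLB
      have hhalf := half_le_of_LB hLB
      exact hzero1 (lt_of_lt_of_le (by simp) (le_trans hhalf (le_of_eq (pay_eq σ' 1).symm)))
    · -- c2 = 4 : deviation payoff = 1
      have key : ∀ g : Fin 3 → Fin 7, wordProbFrom GA σ' 0 (List.ofFn g) ≠ 0 →
          g (Fin.last 2) ∈ {v : Fin 7 | FF 1 v = true} := by
        intro g hg
        rw [ofFn3] at hg
        obtain ⟨hg0, hg⟩ := wordProb_ne_zero_cons GA σ' hg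
        obtain ⟨hs1, hg⟩ := extProb_ne_zero_cons GA σ' hg
        obtain ⟨hs2, -⟩ := extProb_ne_zero_cons GA σ' hg
        rw [hg0] at hs1
        have h1 : g 1 = 1 := hstepA' _ _ hs1
        rw [h1] at hs2
        have h2 : g 2 = 4 := hstepB' _ _ hs2
        show FF 1 (g (Fin.last 2)) = true
        rw [show g (Fin.last 2) = g 2 from rfl, h2]
        rfl
      have h1 := one_le_prFrom_trObjS GA σ' 0 owner_ne 2 _ key
      exact hzero1 (lt_of_lt_of_le (by simp) (le_trans h1 (le_of_eq (pay_eq σ' 1).symm)))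

end Ex1

end NCRSPPaper

namespace NCRSPPaper

namespace Ex1

def cB2 : Fin 7 → Fin 7 := ![1, 4, 5, 3, 4, 5, 6]

def cB1 : Fin 7 → Fin 7 := ![3, 2, 5, 3, 4, 5, 6]

noncomputable def mkProf (a b c : Strategy (Fin 7)) : Profile 2 (Fin 7) :=
  fun i => if i = 0 then a else if i = 1 then b else c

lemma partB : ¬ NCRSPAnswer GA (fun i => trObj (FF i)) Strategy.Pure Strategy.Pure 1 := by
  rintro ⟨σ0, hvalid0, hpure0, hmain⟩
  obtain ⟨d, hd⟩ := hpure0 [0, 1] 2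
  have hdmem : d = 5 ∨ d = 6 := by
    have := mem_next.mp (hvalid0 [0, 1] 2 d (by rw [hd]; exact one_ne_zero))
    simpa [nexts] using this
  rcases hdmem with rfl | rfl
  · -- system goes to t₁ = (1,1,0); player 2 blocks at v₁
    set σ : Profile 2 (Fin 7) := mkProf σ0 (pureS cGo) (pureS cB2) with hσdef
    have hs0 : σ 0 = σ0 := rfl
    have hs1 : σ 1 = pureS cGo := rfl
    have hs2 : σ 2 = pureS cB2 := rfl
    have hvalσ : Profile.Valid GA σ := by
      intro i
      fin_cases i
      · exact hvalid0
      · exact pureS_valid cGo (by decide)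
      · exact pureS_valid cB2 (by decide)
    have henv : ∀ i : Fin 3, i ≠ 0 → Strategy.Pure (σ i) := by
      intro i hi
      fin_cases i
      · exact absurd rfl hi
      · exact (pureS_positional cGo).2
      · exact (pureS_positional cB2).2
    have hZNE : ZeroNE GA (fun i => trObj (FF i)) σ := by
      intro i hi τ hτ
      fin_cases i
      · exact absurd rfl hi
      · -- player 1: her payoff is already 1
        have h1 : 1 ≤ Pay GA (fun j => trObj (FF j)) σ 1 := by
          rw [pay_eq]
          refine one_le_prFrom_trObjS GA σ 0 owner_ne 2 _ ?_
          intro g hg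
          rw [ofFn3] at hg
          obtain ⟨hg0, hg⟩ := wordProb_ne_zero_cons GA σ hg
          obtain ⟨hs1', hg⟩ := extProb_ne_zero_cons GA σ hg
          obtain ⟨hs2', -⟩ := extProb_ne_zero_cons GA σ hg
          rw [hg0] at hs1'
          rw [step_at_0, hs1] at hs1'
          have h1 : g 1 = 1 := by simpa [cGo] using pureS_apply_ne cGo hs1'
          rw [h1] at hs2'
          rw [step_at_1, hs2] at hs2'
          have h2 : g 2 = 4 := by simpa [cB2] using pureS_apply_ne cB2 hs2'
          show FF 1 (g (Fin.last 2)) = true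
          rw [show g (Fin.last 2) = g 2 from rfl, h2]
          rfl
        calc Pay GA (fun j => trObj (FF j)) (Function.update σ 1 τ) 1
            ≤ 1 := by rw [pay_eq]; exact prFrom_le_one GA _ 0 _
          _ ≤ _ := h1
      · -- player 2: any deviation still yields payoff 0
        set σ'' := Function.update σ 2 τ with hσ''
        have hu0 : σ'' 0 = σ0 := by
          rw [hσ'', Function.update_of_ne (by decide)]
          exact hs0
        have hu1 : σ'' 1 = pureS cGo := by
          rw [hσ'', Function.update_of_ne (by decide)]
          exact hs1
        have hval'' : Profile.Valid GA σ'' := by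
          intro j
          rcases eq_or_ne j 2 with rfl | hj
          · rw [hσ'', Function.update_self]; exact hτ
          · rw [hσ'', Function.update_of_ne hj]; exact hvalσ j
        have h0' : Pay GA (fun j => trObj (FF j)) σ'' 2 = 0 := by
          rw [pay_eq]
          apply prFrom_trObjS_eq_zero GA σ'' 0 {v : Fin 7 | FF 2 v = true}
            (fun hist u => (u = 0 ∧ hist = []) ∨ (u = 1 ∧ hist = [0]) ∨
              (u = 2 ∧ hist = [0, 1]) ∨ u = 4 ∨ u = 5)
          · exact Or.inl ⟨rfl, rfl⟩
          · intro hist u v hG hv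
            rcases hG with ⟨rfl, rfl⟩ | ⟨rfl, rfl⟩ | ⟨rfl, rfl⟩ | rfl | rfl
            · rw [step_at_0, hu1] at hv
              exact Or.inr (Or.inl ⟨by simpa [cGo] using pureS_apply_ne cGo hv, rfl⟩)
            · rw [step_at_1, hσ'', Function.update_self] at hv
              have := mem_next.mp (hτ [0] 1 v hv)
              simp [nexts] at this
              rcases this with rfl | rfl
              · exact Or.inr (Or.inr (Or.inl ⟨rfl, rfl⟩))
              · exact Or.inr (Or.inr (Or.inr (Or.inl rfl)))
            · rw [step_at_sys σ'' 2 (by decide), hu0] at hv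
              have hv5 : v = 5 := by
                by_contra h
                exact hv (pmf_zero hd h)
              exact Or.inr (Or.inr (Or.inr (Or.inr hv5)))
            · exact Or.inr (Or.inr (Or.inr (Or.inl
                (step_terminal σ'' hval'' 4 (by decide) hist v hv))))
            · exact Or.inr (Or.inr (Or.inr (Or.inr
                (step_terminal σ'' hval'' 5 (by decide) hist v hv))))
          · intro hist u hG
            rcases hG with ⟨rfl, -⟩ | ⟨rfl, -⟩ | ⟨rfl, -⟩ | rfl | rfl <;> simp [FF]
        exact le_trans (le_of_eq h0') (zero_le)
    have h := hmain σ rfl hvalσ henv hZNE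
    have hpay0 : Pay GA (fun j => trObj (FF j)) σ 0 = 0 := by
      rw [pay_eq]
      apply prFrom_trObjS_eq_zero GA σ 0 {v : Fin 7 | FF 0 v = true}
        (fun hist u => (u = 0 ∧ hist = []) ∨ (u = 1 ∧ hist = [0]) ∨ u = 4)
      · exact Or.inl ⟨rfl, rfl⟩
      · intro hist u v hG hv
        rcases hG with ⟨rfl, rfl⟩ | ⟨rfl, rfl⟩ | rfl
        · rw [step_at_0, hs1] at hv
          exact Or.inr (Or.inl ⟨by simpa [cGo] using pureS_apply_ne cGo hv, rfl⟩)
        · rw [step_at_1, hs2] at hv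
          exact Or.inr (Or.inr (by simpa [cB2] using pureS_apply_ne cB2 hv))
        · exact Or.inr (Or.inr (step_terminal σ hvalσ 4 (by decide) hist v hv))
      · intro hist u hG
        rcases hG with ⟨rfl, -⟩ | ⟨rfl, -⟩ | rfl <;> simp [FF]
    rw [hpay0] at h
    simp at h
  · -- system goes to t₂ = (1,0,1); player 1 blocks at v₀
    set σ : Profile 2 (Fin 7) := mkProf σ0 (pureS cB1) (pureS cGo) with hσdef
    have hs0 : σ 0 = σ0 := rfl
    have hs1 : σ 1 = pureS cB1 := rfl
    have hs2 : σ 2 = pureS cGo := rfl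
    have hvalσ : Profile.Valid GA σ := by
      intro i
      fin_cases i
      · exact hvalid0
      · exact pureS_valid cB1 (by decide)
      · exact pureS_valid cGo (by decide)
    have henv : ∀ i : Fin 3, i ≠ 0 → Strategy.Pure (σ i) := by
      intro i hi
      fin_cases i
      · exact absurd rfl hi
      · exact (pureS_positional cB1).2
      · exact (pureS_positional cGo).2
    have hZNE : ZeroNE GA (fun i => trObj (FF i)) σ := by
      intro i hi τ hτ
      fin_cases i
      · exact absurd rfl hi
      · -- player 1: any deviation still yields payoff 0
        set σ'' := Function.update σ 1 τ with hσ''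
        have hu0 : σ'' 0 = σ0 := by
          rw [hσ'', Function.update_of_ne (by decide)]
          exact hs0
        have hu2 : σ'' 2 = pureS cGo := by
          rw [hσ'', Function.update_of_ne (by decide)]
          exact hs2
        have hval'' : Profile.Valid GA σ'' := by
          intro j
          rcases eq_or_ne j 1 with rfl | hj
          · rw [hσ'', Function.update_self]; exact hτ
          · rw [hσ'', Function.update_of_ne hj]; exact hvalσ j
        have h0' : Pay GA (fun j => trObj (FF j)) σ'' 1 = 0 := by
          rw [pay_eq]
          apply prFrom_trObjS_eq_zero GA σ'' 0 {v : Fin 7 | FF 1 v = true}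
            (fun hist u => (u = 0 ∧ hist = []) ∨ (u = 1 ∧ hist = [0]) ∨
              (u = 2 ∧ hist = [0, 1]) ∨ u = 3 ∨ u = 6)
          · exact Or.inl ⟨rfl, rfl⟩
          · intro hist u v hG hv
            rcases hG with ⟨rfl, rfl⟩ | ⟨rfl, rfl⟩ | ⟨rfl, rfl⟩ | rfl | rfl
            · rw [step_at_0, hσ'', Function.update_self] at hv
              have := mem_next.mp (hτ [] 0 v hv)
              simp [nexts] at this
              rcases this with rfl | rfl
              · exact Or.inr (Or.inl ⟨rfl, rfl⟩)
              · exact Or.inr (Or.inr (Or.inr (Or.inl rfl)))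
            · rw [step_at_1, hu2] at hv
              exact Or.inr (Or.inr (Or.inl
                ⟨by simpa [cGo] using pureS_apply_ne cGo hv, rfl⟩))
            · rw [step_at_sys σ'' 2 (by decide), hu0] at hv
              have hv6 : v = 6 := by
                by_contra h
                exact hv (pmf_zero hd h)
              exact Or.inr (Or.inr (Or.inr (Or.inr hv6)))
            · exact Or.inr (Or.inr (Or.inr (Or.inl
                (step_terminal σ'' hval'' 3 (by decide) hist v hv))))
            · exact Or.inr (Or.inr (Or.inr (Or.inr
                (step_terminal σ'' hval'' 6 (by decide) hist v hv))))
          · intro hist u hG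
            rcases hG with ⟨rfl, -⟩ | ⟨rfl, -⟩ | ⟨rfl, -⟩ | rfl | rfl <;> simp [FF]
        exact le_trans (le_of_eq h0') (zero_le)
      · -- player 2: any deviation still yields payoff 0
        set σ'' := Function.update σ 2 τ with hσ''
        have hu1 : σ'' 1 = pureS cB1 := by
          rw [hσ'', Function.update_of_ne (by decide)]
          exact hs1
        have hval'' : Profile.Valid GA σ'' := by
          intro j
          rcases eq_or_ne j 2 with rfl | hj
          · rw [hσ'', Function.update_self]; exact hτ
          · rw [hσ'', Function.update_of_ne hj]; exact hvalσ j
        have h0' : Pay GA (fun j => trObj (FF j)) σ'' 2 = 0 := by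
          rw [pay_eq]
          apply prFrom_trObjS_eq_zero GA σ'' 0 {v : Fin 7 | FF 2 v = true}
            (fun hist u => (u = 0 ∧ hist = []) ∨ u = 3)
          · exact Or.inl ⟨rfl, rfl⟩
          · intro hist u v hG hv
            rcases hG with ⟨rfl, rfl⟩ | rfl
            · rw [step_at_0, hu1] at hv
              exact Or.inr (by simpa [cB1] using pureS_apply_ne cB1 hv)
            · exact Or.inr (step_terminal σ'' hval'' 3 (by decide) hist v hv)
          · intro hist u hG
            rcases hG with ⟨rfl, -⟩ | rfl <;> simp [FF]
        exact le_trans (le_of_eq h0') (zero_le)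
    have h := hmain σ rfl hvalσ henv hZNE
    have hpay0 : Pay GA (fun j => trObj (FF j)) σ 0 = 0 := by
      rw [pay_eq]
      apply prFrom_trObjS_eq_zero GA σ 0 {v : Fin 7 | FF 0 v = true}
        (fun hist u => (u = 0 ∧ hist = []) ∨ u = 3)
      · exact Or.inl ⟨rfl, rfl⟩
      · intro hist u v hG hv
        rcases hG with ⟨rfl, rfl⟩ | rfl
        · rw [step_at_0, hs1] at hv
          exact Or.inr (by simpa [cB1] using pureS_apply_ne cB1 hv)
        · exact Or.inr (step_terminal σ hvalσ 3 (by decide) hist v hv)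
      · intro hist u hG
        rcases hG with ⟨rfl, -⟩ | rfl <;> simp [FF]
    rw [hpay0] at h
    simp at h

end Ex1

end NCRSPPaper

namespace NCRSPPaper

/-- There is an SMG with three players `0, 1, 2`, all with
terminal-reachability objectives, such that with threshold `μ = 1` the
answer of Stationary-Positional-NCRSP is yes while the answer of
Pure-NCRSP is no. -/
theorem exists_SMG_SP_yes_pure_no :
    ∃ (n : ℕ) (A : Arena 2 (Fin n)) (F : Fin 3 → Fin n → Bool),
      A.WF ∧ (∀ i v, F i v = true → A.terminal v) ∧
      NCRSPAnswer A (fun i => trObj (F i))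
        Strategy.Stationary Strategy.Positional 1 ∧
      ¬ NCRSPAnswer A (fun i => trObj (F i))
        Strategy.Pure Strategy.Pure 1 := by
  exact ⟨7, Ex1.GA, Ex1.FF, Ex1.GA_wf, Ex1.GA_hterm, Ex1.partA, Ex1.partB⟩

end NCRSPPaper
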